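/- arXiv:1111.4973 — 6 statements merged into one kernel-verified Lean document; each statement's English description precedes it below -/
import Mathlib

section
/- Let a ≠ 0 and c be real numbers with c² > a² (i.e. |X(Yh)(0)| > |X²h(0)|). Then the first return matrix !![(4c² − a²)/a², −2c/a; 2c/a, −1] has two distinct real eigenvalues λ₊ ≠ λ₋ with λ₊ · λ₋ = 1 and |λ₊| ≠ 1 and |λ₋| ≠ 1; that is, the origin is a hyperbolic saddle fixed point of the first return map. -/
lemma eig2 (p q r s lam : ℝ) (hq : q ≠ 0)
    (hchar : lam ^ 2 - (p + s) * lam + (p * s - q * r) = 0) :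
    Module.End.HasEigenvalue (Matrix.toLin' (!![p, q; r, s] : Matrix (Fin 2) (Fin 2) ℝ)) lam := by
  apply Module.End.hasEigenvalue_of_hasEigenvector (x := ![q, lam - p])
  constructor
  · rw [Module.End.mem_eigenspace_iff]
    funext i
    fin_cases i <;>
      simp [Matrix.toLin'_apply, Matrix.mulVec, dotProduct, Fin.sum_univ_two] <;> nlinarith [hchar]
  · intro hv
    exact hq (by simpa using congrFun hv 0)

/-- For `c² > a²` the first return matrix has two distinct real eigenvalues
`λ₊ ≠ λ₋` with `λ₊ λ₋ = 1`, `|λ₊| ≠ 1` and `|λ₋| ≠ 1`: the origin is a hyperbolic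
saddle fixed point of the first return map. -/
theorem stmt_7 (a c : ℝ) (ha : a ≠ 0) (h : a ^ 2 < c ^ 2) :
    ∃ lp lm : ℝ, lp ≠ lm ∧ lp * lm = 1 ∧ |lp| ≠ 1 ∧ |lm| ≠ 1 ∧
      Module.End.HasEigenvalue
        (Matrix.toLin'
          (!![(4 * c ^ 2 - a ^ 2) / a ^ 2, -2 * c / a; 2 * c / a, -1] : Matrix (Fin 2) (Fin 2) ℝ))
        lp ∧
      Module.End.HasEigenvalue
        (Matrix.toLin'
          (!![(4 * c ^ 2 - a ^ 2) / a ^ 2, -2 * c / a; 2 * c / a, -1] : Matrix (Fin 2) (Fin 2) ℝ))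
        lm := by
  have ha2 : (0:ℝ) < a ^ 2 := by positivity
  have hc : c ≠ 0 := by
    intro hc; rw [hc] at h; nlinarith
  set t : ℝ := (4 * c ^ 2 - 2 * a ^ 2) / a ^ 2 with ht
  have ht2 : 2 < t := by
    rw [ht, lt_div_iff₀ ha2]; nlinarith
  have hd2 : 0 < t ^ 2 - 4 := by nlinarith
  set d : ℝ := Real.sqrt (t ^ 2 - 4) with hdd
  have hdsq : d ^ 2 = t ^ 2 - 4 := Real.sq_sqrt hd2.le
  have hd : 0 < d := Real.sqrt_pos.mpr hd2
  refine ⟨(t + d) / 2, (t - d) / 2, by nlinarith, by nlinarith, ?_, ?_, ?_, ?_⟩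
  · have : 1 < (t + d) / 2 := by nlinarith
    rw [abs_of_pos (by linarith)]; linarith
  · have h1 : 0 < (t - d) / 2 := by nlinarith
    have h2 : (t - d) / 2 < 1 := by nlinarith
    rw [abs_of_pos h1]; linarith
  all_goals {
    apply eig2
    · exact div_ne_zero (by simpa using hc) ha
    · have hps : (4 * c ^ 2 - a ^ 2) / a ^ 2 + (-1) = t := by
        rw [ht]; field_simp; ring
      have hdet : (4 * c ^ 2 - a ^ 2) / a ^ 2 * (-1) - (-2 * c / a) * (2 * c / a) = 1 := by
        field_simp; ring
      rw [hps, hdet]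
      nlinarith }
end

section
/- Let a ≠ 0 and c be real numbers with 0 < c² < a² (i.e. 0 < |X(Yh)(0)| < |X²h(0)|). Then the characteristic polynomial λ² − ((4c² − 2a²)/a²)λ + 1 of the first return matrix !![(4c² − a²)/a², −2c/a; 2c/a, −1] has no real root, and its two complex roots have modulus 1; that is, the origin is an elliptic fixed point of the first return map. -/
/-- For `0 < c² < a²` the characteristic polynomial `λ² - ((4c² - 2a²)/a²) λ + 1`
of the first return matrix has no real root, and its complex roots have modulus 1:
the origin is an elliptic fixed point of the first return map. -/
theorem stmt_8 (a c : ℝ) (ha : a ≠ 0) (hc : 0 < c ^ 2) (h : c ^ 2 < a ^ 2) :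
    (∀ l : ℝ, l ^ 2 - (4 * c ^ 2 - 2 * a ^ 2) / a ^ 2 * l + 1 ≠ 0) ∧
    (∀ z : ℂ, z ^ 2 - (((4 * c ^ 2 - 2 * a ^ 2) / a ^ 2 : ℝ) : ℂ) * z + 1 = 0 →
      ‖z‖ = 1) := by
  have ha2 : (0:ℝ) < a ^ 2 := by positivity
  set t : ℝ := (4 * c ^ 2 - 2 * a ^ 2) / a ^ 2 with ht
  have ht2 : t ^ 2 < 4 := by
    rw [ht, div_pow, div_lt_iff₀ (by positivity)]
    nlinarith
  have key : ∀ l : ℝ, l ^ 2 - t * l + 1 ≠ 0 := by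
    intro l hl
    nlinarith [sq_nonneg (2 * l - t)]
  refine ⟨key, fun z hz => ?_⟩
  have hre := congrArg Complex.re hz
  have him := congrArg Complex.im hz
  simp [pow_two, Complex.mul_re, Complex.mul_im] at hre him
  set x := z.re
  set y := z.im
  -- him : x * y + y * x - t * y = 0 form
  have hy : y ≠ 0 := by
    intro hy0
    apply key x
    rw [hy0] at hre
    nlinarith [hre]
  have htx : t = 2 * x := by
    rcases mul_eq_zero.mp (show y * (2 * x - t) = 0 by nlinarith [him]) with h1 | h2
    · exact absurd h1 hy
    · linarith
  have hxy : x ^ 2 + y ^ 2 = 1 := by rw [htx] at hre; nlinarith [hre]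
  rw [Complex.norm_def, Complex.normSq_apply]
  rw [show z.re * z.re + z.im * z.im = x ^ 2 + y ^ 2 by ring, hxy, Real.sqrt_one]
end

section
/- Let a ≠ 0 and c be real numbers. The first return map M(x, y) = (((4c² − a²)/a²)x − (2c/a)y, (2c/a)x − y) has a fixed point (x, y) ≠ (0, 0) if and only if c = a or c = −a; moreover, if c = a then every point of the line y = x is fixed by M, and if c = −a then every point of the line y = −x is fixed by M. In particular, if c ≠ a and c ≠ −a (i.e. the two-fold is simple) then the origin is the only fixed point of M. -/
/-- The first return map `M(x, y) = (((4c² - a²)/a²) x - (2c/a) y, (2c/a) x - y)`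
has a nonzero fixed point iff `c = a` or `c = -a`; if `c = a` every point of the line
`y = x` is fixed, if `c = -a` every point of the line `y = -x` is fixed, and in the
simple case `c ≠ ±a` the origin is the only fixed point. -/
theorem stmt_10 (a c : ℝ) (ha : a ≠ 0) :
    let M : ℝ × ℝ → ℝ × ℝ := fun p =>
      (((4 * c ^ 2 - a ^ 2) / a ^ 2) * p.1 - 2 * c / a * p.2, 2 * c / a * p.1 - p.2)
    ((∃ p : ℝ × ℝ, p ≠ (0, 0) ∧ M p = p) ↔ (c = a ∨ c = -a)) ∧
    (c = a → ∀ x : ℝ, M (x, x) = (x, x)) ∧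
    (c = -a → ∀ x : ℝ, M (x, -x) = (x, -x)) ∧
    (c ≠ a → c ≠ -a → ∀ p : ℝ × ℝ, M p = p → p = (0, 0)) := by
  intro M
  have hfix : ∀ p : ℝ × ℝ, M p = p ↔
      (2 * c * p.1 = 2 * a * p.2 ∧ (c ^ 2 - a ^ 2) * p.1 = 0) := by
    intro p
    simp only [M, Prod.mk.injEq, Prod.ext_iff]
    constructor
    · rintro ⟨h1, h2⟩
      field_simp at h1 h2
      have e2 : 2 * c * p.1 = 2 * a * p.2 := by linarith
      refine ⟨e2, ?_⟩
      have key : a * (2 * ((c ^ 2 - a ^ 2) * p.1)) = 0 := by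
        linear_combination a * h1 - a * c * e2
      have h2a : 2 * ((c ^ 2 - a ^ 2) * p.1) = 0 :=
        (mul_eq_zero.1 key).resolve_left ha
      linarith
    · rintro ⟨e2, e1⟩
      constructor
      · field_simp
        linear_combination 2 * e1 + c * e2
      · field_simp
        linarith
  have hsimple : c ≠ a → c ≠ -a → ∀ p : ℝ × ℝ, M p = p → p = (0, 0) := by
    intro h1 h2 p hp
    rw [hfix] at hp
    have hc : c ^ 2 - a ^ 2 ≠ 0 := by
      intro h
      rcases mul_eq_zero.1 (by nlinarith : (c - a) * (c + a) = 0) with h | h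
      · exact h1 (by linarith)
      · exact h2 (by linarith)
    have hx : p.1 = 0 := by
      rcases mul_eq_zero.1 hp.2 with h | h
      · exact absurd h hc
      · exact h
    have hy : p.2 = 0 := by
      have := hp.1
      rw [hx] at this
      have : 2 * a * p.2 = 0 := by linarith
      rcases mul_eq_zero.1 this with h | h
      · rcases mul_eq_zero.1 h with h | h
        · norm_num at h
        · exact absurd h ha
      · exact h
    exact Prod.ext hx hy
  have hline1 : c = a → ∀ x : ℝ, M (x, x) = (x, x) := by
    intro h x
    rw [hfix]
    subst h
    constructor <;> ring
  have hline2 : c = -a → ∀ x : ℝ, M (x, -x) = (x, -x) := by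
    intro h x
    rw [hfix]
    subst h
    constructor <;> ring
  refine ⟨⟨?_, ?_⟩, hline1, hline2, hsimple⟩
  · rintro ⟨p, hp, hMp⟩
    by_contra hcon
    push_neg at hcon
    exact hp (hsimple hcon.1 hcon.2 p hMp)
  · rintro (h | h)
    · exact ⟨(1, 1), by simp, hline1 h 1⟩
    · exact ⟨(1, -1), by simp, hline2 h 1⟩
end

section
/- Let a, c, α be real numbers with a ≠ 0 and c ≠ 0, let n ≥ 1 be a natural number, and set β = (4c² − a²)/a² − 2αc/a. If β^n = 1 and β^(n−1)·(2c/a − α) = α (i.e. the n-th iterate of the first return map fixes the points (x, αx) of the line C_α), then either α = 1 and c = a, or α = −1 and c = −a. Consequently: a simple reversible two-fold (c ≠ ±a) has no k-periodic orbits for any k ∈ ℕ, and a non-simple one can have them only along the lines x = y or x = −y. -/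
/-- If the `n`-th iterate (`n ≥ 1`) of the first return map fixes the points `(x, αx)`
of the line `C_α`, i.e. `β^n = 1` and `β^(n-1) (2c/a - α) = α` where
`β = (4c² - a²)/a² - 2αc/a`, then either `α = 1` and `c = a`, or `α = -1` and `c = -a`.
Consequently a simple reversible two-fold (`c ≠ ±a`) has no `k`-periodic orbits, and a
non-simple one can have them only along the lines `x = y` or `x = -y`. -/
theorem stmt_11 (a c α : ℝ) (ha : a ≠ 0) (hc : c ≠ 0) (n : ℕ) (hn : 1 ≤ n)
    (β : ℝ) (hβ : β = (4 * c ^ 2 - a ^ 2) / a ^ 2 - 2 * α * c / a)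
    (h1 : β ^ n = 1) (h2 : β ^ (n - 1) * (2 * c / a - α) = α) :
    (α = 1 ∧ c = a) ∨ (α = -1 ∧ c = -a) := by
  have hpow : β ^ (n - 1) * β = β ^ n := by
    rw [← pow_succ]; congr 1; omega
  have key : 2 * c / a - α = α * β := by
    have h3 : β ^ (n - 1) * (2 * c / a - α) * β = α * β := by rw [h2]
    calc 2 * c / a - α = β ^ n * (2 * c / a - α) := by rw [h1]; ring
      _ = β ^ (n - 1) * (2 * c / a - α) * β := by rw [← hpow]; ring
      _ = α * β := h3
  have hα : α ≠ 0 := by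
    intro h
    rw [h] at key
    have h4 : 2 * c / a = 0 := by linarith
    rcases div_eq_zero_iff.mp h4 with h5 | h5
    · exact hc (by linarith)
    · exact ha h5
  -- From key and hβ: 2αc = (α²+1)a
  have hac : 2 * α * c = (α ^ 2 + 1) * a := by
    rw [hβ] at key
    have ha2 : a ^ 2 ≠ 0 := pow_ne_zero 2 ha
    field_simp at key
    have h4 : 2 * c * a ^ 2 * ((α ^ 2 + 1) * a - 2 * α * c) = 0 := by
      linear_combination a ^ 2 * key
    have h5 : (2 : ℝ) * c * a ^ 2 ≠ 0 := by
      simp [hc, ha]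
    have := (mul_eq_zero.mp h4).resolve_left h5
    linarith
  -- hence β α² = 1
  have hβα : β * α ^ 2 = 1 := by
    rw [hβ]
    have ha2 : a ^ 2 ≠ 0 := pow_ne_zero 2 ha
    field_simp
    linear_combination (2 * α * c + a) * hac
  have hα2pos : (0 : ℝ) < α ^ 2 := by positivity
  have hβpos : 0 < β := by
    rcases lt_trichotomy β 0 with h | h | h
    · nlinarith
    · rw [h] at hβα; simp at hβα
    · exact h
  have hβ1 : β = 1 := by
    rcases (pow_eq_one_iff_cases.mp h1) with h | h | h
    · omega
    · exact h
    · linarith [h.1]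
  have hα2 : α ^ 2 = 1 := by rw [hβ1] at hβα; linarith
  have : (α - 1) * (α + 1) = 0 := by nlinarith
  rcases mul_eq_zero.mp this with h | h
  · have hα1 : α = 1 := by linarith
    left
    refine ⟨hα1, ?_⟩
    rw [hα1] at hac; nlinarith
  · have hα1 : α = -1 := by linarith
    right
    refine ⟨hα1, ?_⟩
    rw [hα1] at hac; nlinarith
end

section
/- Let a, b, c, d be nonzero real numbers and let (x, y) ∈ ℝ² with (x, y) ≠ (0, 0). Then φ₁(x, y) = φ₂(x, y) if and only if c·d = a·b and a·y = c·x; that is, a pseudo periodic orbit can exist only when X(Yh)(0)·Y(Xh)(0) = X²h(0)·Y²h(0) and the point lies on the line C_{λ*} with λ* = c/a. -/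
/-- For nonzero `a, b, c, d` and `(x, y) ≠ (0, 0)` we have `φ₁(x, y) = φ₂(x, y)` iff
`c d = a b` and `a y = c x`: a pseudo periodic orbit can exist only when
`X(Yh)(0) Y(Xh)(0) = X²h(0) Y²h(0)` and the point lies on the line `C_{λ*}`, `λ* = c/a`. -/
theorem stmt_14 (a b c d : ℝ) (ha : a ≠ 0) (hb : b ≠ 0) (hc : c ≠ 0) (hd : d ≠ 0)
    (x y : ℝ) (hxy : (x, y) ≠ ((0 : ℝ), (0 : ℝ))) :
    ((((-1 + 4 * c * d / (a * b)) * x - 2 * d / b * y, 2 * c / a * x - y) : ℝ × ℝ)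
        = ((-x + 2 * d / b * y, -(2 * c / a) * x + (4 * c * d / (a * b) - 1) * y) : ℝ × ℝ))
      ↔ (c * d = a * b ∧ a * y = c * x) := by
  rw [Prod.mk.injEq]
  constructor
  · rintro ⟨h1, h2⟩
    field_simp at h1 h2
    have e1' : (4 * d * b ^ 2) * (c * x - a * y) = 0 := by linear_combination b ^ 2 * h1
    have e2' : (4 * a ^ 2 * c) * (b * x - d * y) = 0 := by linear_combination a ^ 2 * h2
    have h4db : (4 * d * b ^ 2) ≠ 0 := by positivity
    have h4ac : (4 * a ^ 2 * c) ≠ 0 := by positivity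
    have e1 : c * x = a * y := by
      have := (mul_eq_zero.mp e1').resolve_left h4db; linarith
    have e2 : b * x = d * y := by
      have := (mul_eq_zero.mp e2').resolve_left h4ac; linarith
    have hy : y ≠ 0 := by
      intro hy0
      apply hxy
      have hx0 : x = 0 := by
        have := e2
        rw [hy0, mul_zero] at this
        exact (mul_eq_zero.mp this).resolve_left hb
      simp [hx0, hy0]
    have e3 : (c * d - a * b) * y = 0 := by linear_combination b * e1 - c * e2
    have e4 : c * d - a * b = 0 := (mul_eq_zero.mp e3).resolve_right hy
    exact ⟨by linarith, e1.symm⟩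
  · rintro ⟨h1, h2⟩
    have e2 : b * x = d * y := by
      have : c * (b * x) = c * (d * y) := by
        calc c * (b * x) = b * (c * x) := by ring
          _ = b * (a * y) := by rw [← h2]
          _ = (c * d) * y := by rw [h1]; ring
          _ = c * (d * y) := by ring
      exact mul_left_cancel₀ hc this
    constructor
    · field_simp
      linear_combination (-(4 * d)) * h2
    · field_simp
      linear_combination (4 * c) * e2
end

section
/- Let a, b, c, d be nonzero real numbers with c·d = a·b. Then every point p = (x, (c/a)x) of the line C_{λ*} with λ* = c/a satisfies φ₁(p) = p and φ₂(p) = p; that is, the line C_{λ*} consists entirely of fixed points of both fold-map compositions, giving a one-parameter family of periodic orbits. -/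
/-- For nonzero `a, b, c, d` with `c d = a b`, every point `p = (x, (c/a) x)` of the
line `C_{λ*}`, `λ* = c/a`, is a fixed point of both fold-map compositions `φ₁` and `φ₂`:
the line `C_{λ*}` gives a one-parameter family of periodic orbits. -/
theorem stmt_15 (a b c d : ℝ) (ha : a ≠ 0) (hb : b ≠ 0) (hc : c ≠ 0) (hd : d ≠ 0)
    (h : c * d = a * b) (x : ℝ) :
    ((((-1 + 4 * c * d / (a * b)) * x - 2 * d / b * (c / a * x),
        2 * c / a * x - c / a * x) : ℝ × ℝ) = (x, c / a * x)) ∧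
    (((-x + 2 * d / b * (c / a * x),
        -(2 * c / a) * x + (4 * c * d / (a * b) - 1) * (c / a * x)) : ℝ × ℝ)
      = (x, c / a * x)) := by
  refine ⟨Prod.ext ?_ ?_, Prod.ext ?_ ?_⟩
  · show (-1 + 4 * c * d / (a * b)) * x - 2 * d / b * (c / a * x) = x
    field_simp
    ring_nf
    linear_combination (2 * x) * h
  · show 2 * c / a * x - c / a * x = c / a * x
    ring
  · show -x + 2 * d / b * (c / a * x) = x
    field_simp
    ring_nf
    linear_combination (2 * x) * h
  · show -(2 * c / a) * x + (4 * c * d / (a * b) - 1) * (c / a * x) = c / a * x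
    field_simp
    ring_nf
    linear_combination (4 * x) * h
end
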